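/- arXiv:2003.05552 — 4 statements merged into one kernel-verified Lean document; each statement's English description precedes it below -/
import Mathlib

section
/- Let α > 0 and let θ be a quaternion with ‖θ‖ < 1. Let f : (0,∞) → ℍ be measurable with ∫₀^∞ ‖f(x)‖² x^α e^{-x} dx < ∞, and for each n ∈ ℕ set c_n = ∫₀^∞ φ_n^{α}(x)·f(x) x^α e^{-x} dx ∈ ℍ. Then the series ∑_{n=0}^∞ ‖θ^n · c_n‖² converges and ∑_{n=0}^∞ ‖θ^n · c_n‖² ≤ (1 − ‖θ‖²)^{-1} · ∫₀^∞ ‖f(x)‖² x^α e^{-x} dx. (Thus the fractional transform f ↦ ∑ φ_n^{α} θ^n c_n is a continuous k-contraction of L²(μ_α) with k ≤ (1 − ‖θ‖²)^{-1/2}.) -/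
open MeasureTheory Set Quaternion

/-- Generalized Laguerre polynomial `L_n^{(α)}(x)`. -/
noncomputable def lagPoly (α : ℝ) (n : ℕ) (x : ℝ) : ℝ :=
  ∑ k ∈ Finset.range (n + 1),
    (-1 : ℝ) ^ k / ((Nat.factorial k : ℝ) * (Nat.factorial (n - k) : ℝ)) *
      (Real.Gamma (n + α + 1) / Real.Gamma (k + α + 1)) * x ^ k

/-- Normalized Laguerre function `φ_n^{α}(x)`. -/
noncomputable def lagFun (α : ℝ) (n : ℕ) (x : ℝ) : ℝ :=
  Real.sqrt ((Nat.factorial n : ℝ) / Real.Gamma (α + n + 1)) * lagPoly α n x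

open Finset


lemma sum_neg' (s : Finset ℕ) (F : ℕ → ℝ) : ∑ j ∈ s, (-F j) = -∑ j ∈ s, F j := by simp

lemma pascal_step (g : ℕ → ℝ) (n : ℕ) :
    ∑ j ∈ range (n + 2), (-1 : ℝ) ^ j * ((n + 1).choose j) * g j
      = ∑ j ∈ range (n + 1), (-1 : ℝ) ^ j * (n.choose j) * (g j - g (j + 1)) := by
  have h3 : ∑ j ∈ range (n + 1), (-1 : ℝ) ^ j * (n.choose (j + 1)) * g (j + 1)
      = g 0 - ∑ j ∈ range (n + 1), (-1 : ℝ) ^ j * (n.choose j) * g j := by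
    rw [Finset.sum_range_succ (fun j => (-1 : ℝ) ^ j * (n.choose (j + 1)) * g (j + 1)) n,
        Finset.sum_range_succ' (fun j => (-1 : ℝ) ^ j * (n.choose j) * g j) n]
    have : ∑ j ∈ range n, (-1 : ℝ) ^ (j + 1) * (n.choose (j + 1)) * g (j + 1)
        = -∑ j ∈ range n, (-1 : ℝ) ^ j * (n.choose (j + 1)) * g (j + 1) := by
      rw [← sum_neg']; exact Finset.sum_congr rfl fun j _ => by ring
    rw [this]
    simp [Nat.choose_succ_self]
  have h1 : ∑ j ∈ range (n + 2), (-1 : ℝ) ^ j * ((n + 1).choose j) * g j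
      = (∑ j ∈ range (n + 1), (-1 : ℝ) ^ (j + 1) * ((n + 1).choose (j + 1)) * g (j + 1)) + g 0 := by
    rw [Finset.sum_range_succ' (fun j => (-1 : ℝ) ^ j * ((n + 1).choose j) * g j) (n + 1)]
    simp
  rw [h1]
  have h2 : ∑ j ∈ range (n + 1), (-1 : ℝ) ^ (j + 1) * ((n + 1).choose (j + 1)) * g (j + 1)
      = -(∑ j ∈ range (n + 1), (-1 : ℝ) ^ j * (n.choose j) * g (j + 1))
        - ∑ j ∈ range (n + 1), (-1 : ℝ) ^ j * (n.choose (j + 1)) * g (j + 1) := by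
    rw [← sum_neg', ← Finset.sum_sub_distrib]
    refine Finset.sum_congr rfl fun j _ => ?_
    rw [Nat.choose_succ_succ]
    push_cast
    ring
  rw [h2, h3]
  have : ∑ j ∈ range (n + 1), (-1 : ℝ) ^ j * (n.choose j) * (g j - g (j + 1))
      = ∑ j ∈ range (n + 1), ((-1 : ℝ) ^ j * (n.choose j) * g j - (-1 : ℝ) ^ j * (n.choose j) * g (j + 1)) :=
    Finset.sum_congr rfl fun j _ => by ring
  rw [this, Finset.sum_sub_distrib]
  ring

lemma prod_shift_sub (x : ℝ) (k : ℕ) :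
    ∏ i ∈ range (k + 1), (x + i) - ∏ i ∈ range (k + 1), (x + 1 + i)
      = -((k : ℝ) + 1) * ∏ i ∈ range k, (x + 1 + i) := by
  have h1 : ∏ i ∈ range (k + 1), (x + i) = x * ∏ i ∈ range k, (x + 1 + i) := by
    rw [Finset.prod_range_succ' (fun i => x + i) k]
    simp only [Nat.cast_zero, add_zero]
    rw [mul_comm]
    congr 1
    exact Finset.prod_congr rfl fun i _ => by push_cast; ring
  rw [h1, Finset.prod_range_succ]
  ring

lemma altsum (n : ℕ) : ∀ (k : ℕ), k ≤ n → ∀ (b : ℝ),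
    ∑ j ∈ range (n + 1), (-1 : ℝ) ^ j * (n.choose j) * ∏ i ∈ range k, ((j : ℝ) + b + i)
      = if k = n then (-1 : ℝ) ^ n * n.factorial else 0 := by
  induction n with
  | zero =>
    intro k hk b
    interval_cases k
    simp
  | succ n ih =>
    intro k hk b
    rw [show n + 1 + 1 = n + 2 from rfl, pascal_step]
    match k with
    | 0 => simp
    | k + 1 =>
      have hterm : ∀ j ∈ range (n + 1),
          (-1 : ℝ) ^ j * (n.choose j) *
            ((∏ i ∈ range (k + 1), ((j : ℝ) + b + i)) - ∏ i ∈ range (k + 1), (((j : ℕ) + 1 : ℕ) + b + i))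
          = -((k : ℝ) + 1) * ((-1 : ℝ) ^ j * (n.choose j) * ∏ i ∈ range k, ((j : ℝ) + (b + 1) + i)) := by
        intro j _
        have := prod_shift_sub ((j : ℝ) + b) k
        have e2 : ∏ i ∈ range (k + 1), ((((j : ℕ) + 1 : ℕ) : ℝ) + b + i)
            = ∏ i ∈ range (k + 1), ((j : ℝ) + b + 1 + i) :=
          Finset.prod_congr rfl fun i _ => by push_cast; ring
        have e3 : ∏ i ∈ range k, ((j : ℝ) + (b + 1) + i)
            = ∏ i ∈ range k, ((j : ℝ) + b + 1 + i) :=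
          Finset.prod_congr rfl fun i _ => by ring
        rw [e2, e3, this]; ring
      rw [Finset.sum_congr rfl hterm, ← Finset.mul_sum,
        ih k (Nat.lt_succ_iff.mp hk) (b + 1)]
      by_cases hkn : k = n
      · subst hkn
        simp [Nat.factorial_succ]
        push_cast
        ring
      · have : ¬(k + 1 = n + 1) := by omega
        simp [hkn, this]


lemma Gamma_add_nat' {x : ℝ} (hx : 0 < x) (k : ℕ) :
    Real.Gamma (x + k) = Real.Gamma x * ∏ i ∈ range k, (x + i) := by
  induction k with
  | zero => simp
  | succ k ih =>
    have hxk : x + (k : ℝ) ≠ 0 := by positivity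
    have : x + ((k : ℕ) + 1 : ℕ) = (x + k) + 1 := by push_cast; ring
    rw [this, Real.Gamma_add_one hxk, ih, Finset.prod_range_succ]
    ring

lemma weight_integrable {α : ℝ} (hα : 0 < α) (m : ℕ) :
    IntegrableOn (fun x : ℝ => x ^ m * (x ^ α * Real.exp (-x))) (Ioi 0) := by
  have h : (0 : ℝ) < (m : ℝ) + α + 1 := by positivity
  refine (Real.GammaIntegral_convergent h).congr_fun (fun x hx => ?_) measurableSet_Ioi
  have hx' : (0 : ℝ) < x := hx
  beta_reduce
  rw [show (m : ℝ) + α + 1 - 1 = (m : ℝ) + α by ring, Real.rpow_add hx', Real.rpow_natCast]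
  ring

lemma weight_integral {α : ℝ} (hα : 0 < α) (m : ℕ) :
    ∫ x in Ioi (0 : ℝ), x ^ m * (x ^ α * Real.exp (-x)) = Real.Gamma ((m : ℝ) + α + 1) := by
  have h : (0 : ℝ) < (m : ℝ) + α + 1 := by positivity
  rw [Real.Gamma_eq_integral h]
  refine setIntegral_congr_fun measurableSet_Ioi (fun x hx => ?_)
  have hx' : (0 : ℝ) < x := hx
  rw [show (m : ℝ) + α + 1 - 1 = (m : ℝ) + α by ring, Real.rpow_add hx', Real.rpow_natCast]
  ring

noncomputable def lagCoef (α : ℝ) (n k : ℕ) : ℝ :=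
  (-1 : ℝ) ^ k / ((Nat.factorial k : ℝ) * (Nat.factorial (n - k) : ℝ)) *
      (Real.Gamma (n + α + 1) / Real.Gamma (k + α + 1))

lemma lagPoly_eq (α : ℝ) (n : ℕ) (x : ℝ) :
    lagPoly α n x = ∑ k ∈ Finset.range (n + 1), lagCoef α n k * x ^ k := rfl



lemma lagPoly_sq_expand (α : ℝ) (n : ℕ) (x : ℝ) :
    (lagPoly α n x) ^ 2 * (x ^ α * Real.exp (-x))
      = ∑ p ∈ Finset.range (n + 1) ×ˢ Finset.range (n + 1),
          (lagCoef α n p.1 * lagCoef α n p.2) * (x ^ (p.1 + p.2) * (x ^ α * Real.exp (-x))) := by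
  rw [sq, lagPoly_eq, Finset.sum_mul_sum, Finset.sum_product, Finset.sum_mul]
  refine Finset.sum_congr rfl fun k _ => ?_
  rw [Finset.sum_mul]
  refine Finset.sum_congr rfl fun j _ => ?_
  rw [pow_add]
  ring

lemma lagPoly_sq_integrable {α : ℝ} (hα : 0 < α) (n : ℕ) :
    IntegrableOn (fun x => (lagPoly α n x) ^ 2 * (x ^ α * Real.exp (-x))) (Ioi 0) := by
  have : (fun x => (lagPoly α n x) ^ 2 * (x ^ α * Real.exp (-x)))
      = fun x => ∑ p ∈ Finset.range (n + 1) ×ˢ Finset.range (n + 1),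
          (lagCoef α n p.1 * lagCoef α n p.2) * (x ^ (p.1 + p.2) * (x ^ α * Real.exp (-x))) :=
    funext fun x => lagPoly_sq_expand α n x
  rw [this]
  exact integrable_finset_sum _ fun p _ => ((weight_integrable hα (p.1 + p.2)).const_mul _)

lemma Gamma_pos' (α : ℝ) (hα : 0 < α) (m : ℕ) : 0 < Real.Gamma ((m : ℝ) + α + 1) :=
  Real.Gamma_pos_of_pos (by positivity)

lemma lagInnerSum {α : ℝ} (hα : 0 < α) (n k : ℕ) (hk : k ≤ n) :
    ∑ j ∈ Finset.range (n + 1), lagCoef α n j * Real.Gamma ((k : ℝ) + (j : ℝ) + α + 1)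
      = if k = n then (-1 : ℝ) ^ n * Real.Gamma ((n : ℝ) + α + 1) else 0 := by
  have key : ∀ j ∈ Finset.range (n + 1),
      lagCoef α n j * Real.Gamma ((k : ℝ) + (j : ℝ) + α + 1)
        = (Real.Gamma ((n : ℝ) + α + 1) / (n.factorial : ℝ)) *
            ((-1 : ℝ) ^ j * (n.choose j) * ∏ i ∈ range k, ((j : ℝ) + (α + 1) + i)) := by
    intro j hj
    have hj' : j ≤ n := Nat.lt_succ_iff.mp (Finset.mem_range.mp hj)
    have hx : (0 : ℝ) < (j : ℝ) + α + 1 := by positivity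
    have hG : Real.Gamma ((k : ℝ) + (j : ℝ) + α + 1)
        = Real.Gamma ((j : ℝ) + α + 1) * ∏ i ∈ range k, ((j : ℝ) + (α + 1) + i) := by
      have := Gamma_add_nat' hx k
      rw [show (k : ℝ) + (j : ℝ) + α + 1 = ((j : ℝ) + α + 1) + (k : ℕ) by push_cast; ring, this]
      congr 1
      exact Finset.prod_congr rfl fun i _ => by ring
    have hfac : ((j.factorial : ℝ) * ((n - j).factorial : ℝ))⁻¹ = (n.choose j : ℝ) / (n.factorial : ℝ) := by
      have h := Nat.choose_mul_factorial_mul_factorial hj'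
      have hne : ((j.factorial : ℝ) * ((n - j).factorial : ℝ)) ≠ 0 := by positivity
      have hne2 : (n.factorial : ℝ) ≠ 0 := by positivity
      field_simp
      rw [← Nat.cast_mul, ← Nat.cast_mul, ← h]
      push_cast
      ring
    have hGj : Real.Gamma ((j : ℝ) + α + 1) ≠ 0 := ne_of_gt (Gamma_pos' α hα j)
    have hcc : ((n.choose j : ℝ)) * ((j.factorial : ℝ) * ((n - j).factorial : ℝ)) = (n.factorial : ℝ) := by
      push_cast [← Nat.choose_mul_factorial_mul_factorial hj']
      ring
    rw [hG, lagCoef]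
    field_simp
    rw [← hcc]
    ring
  rw [Finset.sum_congr rfl key, ← Finset.mul_sum, altsum n k hk (α + 1)]
  by_cases hkn : k = n
  · rw [if_pos hkn, if_pos hkn]
    have hne : (Nat.factorial n : ℝ) ≠ 0 := Nat.cast_ne_zero.mpr (Nat.factorial_ne_zero n)
    field_simp
  · simp [hkn]

lemma lagPoly_sq_integral {α : ℝ} (hα : 0 < α) (n : ℕ) :
    ∫ x in Ioi (0 : ℝ), (lagPoly α n x) ^ 2 * (x ^ α * Real.exp (-x))
      = Real.Gamma ((n : ℝ) + α + 1) / (n.factorial : ℝ) := by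
  have h1 : ∫ x in Ioi (0 : ℝ), (lagPoly α n x) ^ 2 * (x ^ α * Real.exp (-x))
      = ∑ p ∈ Finset.range (n + 1) ×ˢ Finset.range (n + 1),
          (lagCoef α n p.1 * lagCoef α n p.2) * Real.Gamma (((p.1 + p.2 : ℕ) : ℝ) + α + 1) := by
    rw [show (fun x => (lagPoly α n x) ^ 2 * (x ^ α * Real.exp (-x)))
        = fun x => ∑ p ∈ Finset.range (n + 1) ×ˢ Finset.range (n + 1),
          (lagCoef α n p.1 * lagCoef α n p.2) * (x ^ (p.1 + p.2) * (x ^ α * Real.exp (-x)))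
      from funext fun x => lagPoly_sq_expand α n x]
    rw [integral_finset_sum _ fun p _ => ((weight_integrable hα (p.1 + p.2)).const_mul _)]
    exact Finset.sum_congr rfl fun p _ => by rw [integral_const_mul, weight_integral hα]
  rw [h1, Finset.sum_product]
  have h2 : ∀ k ∈ Finset.range (n + 1),
      ∑ j ∈ Finset.range (n + 1),
          (lagCoef α n k * lagCoef α n j) * Real.Gamma (((k + j : ℕ) : ℝ) + α + 1)
        = lagCoef α n k * (if k = n then (-1 : ℝ) ^ n * Real.Gamma ((n : ℝ) + α + 1) else 0) := by
    intro k hk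
    rw [← lagInnerSum hα n k (Nat.lt_succ_iff.mp (Finset.mem_range.mp hk)), Finset.mul_sum]
    refine Finset.sum_congr rfl fun j _ => ?_
    rw [show (((k + j : ℕ) : ℝ)) = (k : ℝ) + (j : ℝ) by push_cast; ring]
    ring
  rw [Finset.sum_congr rfl h2]
  rw [Finset.sum_eq_single_of_mem n (Finset.self_mem_range_succ n)
    (fun k _ hkn => by rw [if_neg hkn, mul_zero])]
  rw [if_pos rfl, lagCoef, Nat.sub_self]
  have hG : Real.Gamma ((n : ℝ) + α + 1) ≠ 0 := ne_of_gt (Gamma_pos' α hα n)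
  have hne : (n.factorial : ℝ) ≠ 0 := by positivity
  rw [show ((n : ℝ) + α + 1) = (↑n + α + 1) from rfl] at hG
  simp only [Nat.factorial_zero, Nat.cast_one, mul_one]
  have hsign : ((-1 : ℝ)) ^ (n * 2) = 1 := by rw [mul_comm, pow_mul, neg_one_sq, one_pow]
  field_simp
  ring_nf
  rw [hsign]

lemma lagPoly_continuous (α : ℝ) (n : ℕ) : Continuous (fun x => lagPoly α n x) := by
  unfold lagPoly
  exact continuous_finset_sum _ fun k _ => continuous_const.mul (continuous_pow (M := ℝ) k)

lemma lagFun_continuous (α : ℝ) (n : ℕ) : Continuous (fun x => lagFun α n x) :=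
  continuous_const.mul (lagPoly_continuous α n)

lemma lagFun_sq (α : ℝ) (hα : 0 < α) (n : ℕ) (x : ℝ) :
    (lagFun α n x) ^ 2 = ((Nat.factorial n : ℝ) / Real.Gamma (α + n + 1)) * (lagPoly α n x) ^ 2 := by
  have h : (0 : ℝ) ≤ (Nat.factorial n : ℝ) / Real.Gamma (α + n + 1) :=
    div_nonneg (Nat.cast_nonneg _) (Real.Gamma_pos_of_pos (by positivity)).le
  rw [lagFun, mul_pow, Real.sq_sqrt h]

lemma lagFun_sq_integrable {α : ℝ} (hα : 0 < α) (n : ℕ) :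
    IntegrableOn (fun x => (lagFun α n x) ^ 2 * (x ^ α * Real.exp (-x))) (Ioi 0) := by
  have := (lagPoly_sq_integrable hα n).const_mul ((Nat.factorial n : ℝ) / Real.Gamma (α + n + 1))
  refine IntegrableOn.congr_fun this (fun x _ => ?_) measurableSet_Ioi
  rw [lagFun_sq α hα n x]
  ring

lemma lagFun_sq_integral {α : ℝ} (hα : 0 < α) (n : ℕ) :
    ∫ x in Ioi (0 : ℝ), (lagFun α n x) ^ 2 * (x ^ α * Real.exp (-x)) = 1 := by
  have h1 : ∫ x in Ioi (0 : ℝ), (lagFun α n x) ^ 2 * (x ^ α * Real.exp (-x))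
      = ((Nat.factorial n : ℝ) / Real.Gamma (α + n + 1)) *
          ∫ x in Ioi (0 : ℝ), (lagPoly α n x) ^ 2 * (x ^ α * Real.exp (-x)) := by
    rw [← integral_const_mul]
    exact setIntegral_congr_fun measurableSet_Ioi fun x _ => by rw [lagFun_sq α hα n x]; ring
  rw [h1, lagPoly_sq_integral hα n]
  have hG : Real.Gamma (α + (n : ℝ) + 1) = Real.Gamma ((n : ℝ) + α + 1) := by ring_nf
  have hGpos : (0 : ℝ) < Real.Gamma ((n : ℝ) + α + 1) := Real.Gamma_pos_of_pos (by positivity)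
  have hfac : (0 : ℝ) < (Nat.factorial n : ℝ) := by positivity
  rw [hG]
  field_simp

/-- Cauchy–Schwarz bound for the coefficients. -/
lemma coef_bound {α : ℝ} (hα : 0 < α) (n : ℕ) (f : ℝ → ℍ[ℝ]) (hfmeas : StronglyMeasurable f)
    (hfint : IntegrableOn (fun x => ‖f x‖ ^ 2 * (x ^ α * Real.exp (-x))) (Ioi 0)) :
    ‖∫ x in Ioi (0 : ℝ), (lagFun α n x * (x ^ α * Real.exp (-x))) • f x‖ ^ 2
      ≤ ∫ x in Ioi (0 : ℝ), ‖f x‖ ^ 2 * (x ^ α * Real.exp (-x)) := by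
  set μ := volume.restrict (Ioi (0 : ℝ)) with hμ
  set w : ℝ → ℝ := fun x => x ^ α * Real.exp (-x) with hw
  set u : ℝ → ℝ := fun x => |lagFun α n x| * Real.sqrt (w x) with hu
  set v : ℝ → ℝ := fun x => Real.sqrt (w x) * ‖f x‖ with hv
  set B : ℝ := ∫ x in Ioi (0 : ℝ), ‖f x‖ ^ 2 * (x ^ α * Real.exp (-x)) with hB
  have hwmeas : Measurable w :=
    ((Real.continuous_rpow_const hα.le).mul (Real.continuous_exp.comp continuous_neg)).measurable
  have hae : ∀ᵐ x ∂μ, x ∈ Ioi (0 : ℝ) := ae_restrict_mem measurableSet_Ioi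
  have hwnn : ∀ x ∈ Ioi (0 : ℝ), 0 ≤ w x := fun x hx =>
    mul_nonneg (Real.rpow_nonneg (le_of_lt hx) α) (Real.exp_pos _).le
  have humeas : AEStronglyMeasurable u μ :=
    (((lagFun_continuous α n).abs.measurable).mul (Real.continuous_sqrt.measurable.comp hwmeas)).aestronglyMeasurable
  have hvmeas : AEStronglyMeasurable v μ :=
    ((Real.continuous_sqrt.measurable.comp hwmeas).mul hfmeas.norm.measurable).aestronglyMeasurable
  have husq : (fun x => u x ^ 2) =ᵐ[μ] fun x => (lagFun α n x) ^ 2 * w x := by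
    filter_upwards [hae] with x hx
    rw [hu]
    simp only
    rw [mul_pow, sq_abs, Real.sq_sqrt (hwnn x hx)]
  have hvsq : (fun x => v x ^ 2) =ᵐ[μ] fun x => ‖f x‖ ^ 2 * w x := by
    filter_upwards [hae] with x hx
    rw [hv]
    simp only
    rw [mul_pow, Real.sq_sqrt (hwnn x hx)]
    ring
  have huint : Integrable (fun x => u x ^ 2) μ :=
    ((lagFun_sq_integrable hα n)).congr husq.symm
  have hvint : Integrable (fun x => v x ^ 2) μ := hfint.congr hvsq.symm
  have hu2 : MemLp u (ENNReal.ofReal 2) μ := by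
    rw [show ENNReal.ofReal 2 = 2 by norm_num]
    exact (memLp_two_iff_integrable_sq humeas).mpr huint
  have hv2 : MemLp v (ENNReal.ofReal 2) μ := by
    rw [show ENNReal.ofReal 2 = 2 by norm_num]
    exact (memLp_two_iff_integrable_sq hvmeas).mpr hvint
  have hpq : Real.HolderConjugate 2 2 := Real.HolderConjugate.two_two
  have hunn : 0 ≤ᵐ[μ] u := Filter.Eventually.of_forall fun x =>
    mul_nonneg (abs_nonneg _) (Real.sqrt_nonneg _)
  have hvnn : 0 ≤ᵐ[μ] v := Filter.Eventually.of_forall fun x =>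
    mul_nonneg (Real.sqrt_nonneg _) (norm_nonneg _)
  have holder := integral_mul_le_Lp_mul_Lq_of_nonneg hpq hunn hvnn hu2 hv2
  have hrpow2 : ∀ y : ℝ, y ^ (2 : ℝ) = y ^ 2 := fun y => by
    rw [show (2 : ℝ) = ((2 : ℕ) : ℝ) by norm_num, Real.rpow_natCast]
  have hIu : ∫ x, u x ^ (2 : ℝ) ∂μ = 1 := by
    simp_rw [hrpow2]
    rw [integral_congr_ae husq]
    exact lagFun_sq_integral hα n
  have hIv : ∫ x, v x ^ (2 : ℝ) ∂μ = B := by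
    simp_rw [hrpow2]
    exact integral_congr_ae hvsq
  rw [hIu, hIv, Real.one_rpow, one_mul] at holder
  have hBnn : 0 ≤ B := by
    rw [hB]
    refine integral_nonneg_of_ae ?_
    filter_upwards [hae] with x hx
    exact mul_nonneg (by positivity) (hwnn x hx)
  have step1 : ‖∫ x in Ioi (0 : ℝ), (lagFun α n x * (x ^ α * Real.exp (-x))) • f x‖
      ≤ ∫ x, u x * v x ∂μ := by
    refine (norm_integral_le_integral_norm _).trans_eq ?_
    refine integral_congr_ae ?_
    filter_upwards [hae] with x hx
    rw [norm_smul]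
    simp only [hu, hv]
    rw [Real.norm_eq_abs, abs_mul, abs_of_nonneg (hwnn x hx)]
    conv_lhs => rw [← Real.mul_self_sqrt (hwnn x hx)]
    ring
  have hnorm : ‖∫ x in Ioi (0 : ℝ), (lagFun α n x * (x ^ α * Real.exp (-x))) • f x‖
      ≤ B ^ ((1 : ℝ) / 2) := step1.trans holder
  calc ‖∫ x in Ioi (0 : ℝ), (lagFun α n x * (x ^ α * Real.exp (-x))) • f x‖ ^ 2
      ≤ (B ^ ((1 : ℝ) / 2)) ^ 2 := pow_le_pow_left₀ (norm_nonneg _) hnorm 2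
    _ = B := by
        rw [← Real.rpow_natCast (B ^ ((1 : ℝ) / 2)) 2, ← Real.rpow_mul hBnn]
        norm_num

/-- for `‖θ‖ < 1` the quaternionic fractional transform is a
`k`-contraction with `k ≤ (1 - ‖θ‖²)^{-1/2}`, in coefficient form. -/
theorem stmt0 (α : ℝ) (hα : 0 < α) (θ : ℍ[ℝ]) (hθ : ‖θ‖ < 1)
    (f : ℝ → ℍ[ℝ]) (hfmeas : StronglyMeasurable f)
    (hfint : IntegrableOn (fun x => ‖f x‖ ^ 2 * (x ^ α * Real.exp (-x))) (Ioi 0))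
    (c : ℕ → ℍ[ℝ])
    (hc : ∀ n, c n = ∫ x in Ioi (0 : ℝ), (lagFun α n x * (x ^ α * Real.exp (-x))) • f x) :
    Summable (fun n : ℕ => ‖θ ^ n * c n‖ ^ 2) ∧
      ∑' n : ℕ, ‖θ ^ n * c n‖ ^ 2 ≤
        (1 - ‖θ‖ ^ 2)⁻¹ * ∫ x in Ioi (0 : ℝ), ‖f x‖ ^ 2 * (x ^ α * Real.exp (-x)) := by
  set B : ℝ := ∫ x in Ioi (0 : ℝ), ‖f x‖ ^ 2 * (x ^ α * Real.exp (-x)) with hB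
  have hbound : ∀ n : ℕ, ‖θ ^ n * c n‖ ^ 2 ≤ (‖θ‖ ^ 2) ^ n * B := by
    intro n
    have h1 : ‖θ ^ n * c n‖ ^ 2 = (‖θ‖ ^ 2) ^ n * ‖c n‖ ^ 2 := by
      rw [norm_mul, norm_pow, mul_pow, ← pow_mul, ← pow_mul, Nat.mul_comm]
    rw [h1]
    have h2 : ‖c n‖ ^ 2 ≤ B := by
      rw [hc n]
      exact coef_bound hα n f hfmeas hfint
    exact mul_le_mul_of_nonneg_left h2 (by positivity)
  have hr0 : (0 : ℝ) ≤ ‖θ‖ ^ 2 := sq_nonneg _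
  have hr1 : ‖θ‖ ^ 2 < 1 := by
    have := pow_lt_one₀ (norm_nonneg θ) hθ (two_ne_zero)
    exact this
  have hgeom : Summable (fun n : ℕ => (‖θ‖ ^ 2) ^ n * B) :=
    (summable_geometric_of_lt_one hr0 hr1).mul_right B
  have hS : Summable (fun n : ℕ => ‖θ ^ n * c n‖ ^ 2) :=
    Summable.of_nonneg_of_le (fun n => by positivity) hbound hgeom
  refine ⟨hS, ?_⟩
  calc ∑' n : ℕ, ‖θ ^ n * c n‖ ^ 2 ≤ ∑' n : ℕ, (‖θ‖ ^ 2) ^ n * B := Summable.tsum_le_tsum hbound hS hgeom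
    _ = (1 - ‖θ‖ ^ 2)⁻¹ * B := by
        rw [tsum_mul_right, tsum_geometric_of_lt_one hr0 hr1]
end

section
/- Let α > 0, let θ be a quaternion with ‖θ‖ = 1, let N ∈ ℕ, and let c_0,…,c_N, d_0,…,d_N ∈ ℍ. Define f(x) = ∑_{n=0}^N φ_n^{α}(x)·c_n, h(x) = ∑_{n=0}^N φ_n^{α}(x)·d_n, and their fractional transforms g_f(x) = ∑_{n=0}^N φ_n^{α}(x)·θ^n·c_n, g_h(x) = ∑_{n=0}^N φ_n^{α}(x)·θ^n·d_n. Then the quaternionic scalar products agree: ∫₀^∞ star(g_f(x))·g_h(x) x^α e^{-x} dx = ∫₀^∞ star(f(x))·h(x) x^α e^{-x} dx. -/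
open MeasureTheory Set Quaternion

open Finset in

open Finset in
lemma lemA (n : ℕ) (p : ℕ → ℝ) :
    ∑ l ∈ range (n+2), (-1:ℝ)^l * ((n+1).choose l) * p l
      = ∑ l ∈ range (n+1), (-1:ℝ)^l * (n.choose l) * (p l - p (l+1)) := by
  have e1 : ∑ l ∈ range (n+2), (-1:ℝ)^l * ((n+1).choose l) * p l
      = (∑ l ∈ range (n+1), ((-1:ℝ)^(l+1) * (n.choose l) * p (l+1)
          + (-1:ℝ)^(l+1) * (n.choose (l+1)) * p (l+1))) + p 0 := by
    rw [Finset.sum_range_succ' (fun l => (-1:ℝ)^l * ((n+1).choose l) * p l) (n+1)]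
    simp [Nat.choose_succ_succ, add_mul, mul_add]
  have e2 : ∑ l ∈ range (n+1), (-1:ℝ)^l * (n.choose l) * p l
      = (∑ l ∈ range (n+1), (-1:ℝ)^(l+1) * (n.choose (l+1)) * p (l+1)) + p 0 := by
    rw [Finset.sum_range_succ' (fun l => (-1:ℝ)^l * (n.choose l) * p l) n,
        Finset.sum_range_succ (fun l => (-1:ℝ)^(l+1) * (n.choose (l+1)) * p (l+1)) n]
    simp [Nat.choose_succ_self]
  rw [e1]
  have e3 : ∑ l ∈ range (n+1), (-1:ℝ)^l * (n.choose l) * (p l - p (l+1))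
      = ∑ l ∈ range (n+1), (-1:ℝ)^l * (n.choose l) * p l
        - ∑ l ∈ range (n+1), (-1:ℝ)^l * (n.choose l) * p (l+1) := by
    rw [← Finset.sum_sub_distrib]; exact Finset.sum_congr rfl (fun l _ => by ring)
  rw [e3, e2, Finset.sum_add_distrib]
  ring_nf
  have e4 : ∑ x ∈ range (1+n), (-1:ℝ)^(x+1) * (n.choose x) * p (x+1)
      = - ∑ x ∈ range (1+n), (-1:ℝ)^x * (n.choose x) * p (x+1) := by
    rw [← Finset.sum_neg_distrib]; exact Finset.sum_congr rfl (fun l _ => by ring)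
  simp only [Finset.sum_neg_distrib]; ring

open Finset in
lemma lemM : ∀ n j : ℕ, j ≤ n →
    ∑ l ∈ range (n+1), (-1:ℝ)^l * (n.choose l) * (l:ℝ)^j
      = if j = n then (-1:ℝ)^n * n.factorial else 0 := by
  intro n
  induction n with
  | zero => intro j hj; interval_cases j; simp
  | succ n ih =>
    intro j hj
    rw [show n+1+1 = n+2 from rfl, lemA n (fun l => (l:ℝ)^j)]
    have key : ∀ l : ℕ, ((l:ℝ))^j - ((l+1:ℕ):ℝ)^j
        = - ∑ i ∈ range j, (j.choose i : ℝ) * (l:ℝ)^i := by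
      intro l
      have hb : ((l:ℝ) + 1)^j = (∑ i ∈ range j, (l:ℝ)^i * 1^(j-i) * (j.choose i))
          + (l:ℝ)^j * 1^(j-j) * (j.choose j) := by
        rw [← Finset.sum_range_succ]; exact add_pow (l:ℝ) 1 j
      push_cast
      rw [hb]
      simp only [one_pow, mul_one, Nat.choose_self, Nat.cast_one]
      have h2 : ∑ i ∈ range j, (j.choose i:ℝ) * (l:ℝ)^i
          = ∑ i ∈ range j, (l:ℝ)^i * (j.choose i) :=
        Finset.sum_congr rfl (fun i _ => by ring)
      rw [h2]; ring
    have e5 : ∑ l ∈ range (n+1), (-1:ℝ)^l * (n.choose l) * (((l:ℝ))^j - ((l+1:ℕ):ℝ)^j)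
        = - ∑ i ∈ range j, (j.choose i : ℝ) *
            ∑ l ∈ range (n+1), (-1:ℝ)^l * (n.choose l) * (l:ℝ)^i := by
      simp_rw [key, mul_neg, Finset.sum_neg_distrib, Finset.mul_sum]
      rw [Finset.sum_comm]
      congr 1
      exact Finset.sum_congr rfl (fun i _ => Finset.sum_congr rfl (fun l _ => by ring))
    push_cast at e5 ⊢
    rw [e5]
    rcases eq_or_lt_of_le hj with hj1 | hj2
    · subst hj1
      rw [if_pos rfl, Finset.sum_eq_single n]
      · rw [ih n le_rfl, if_pos rfl, Nat.choose_succ_self_right]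
        push_cast [Nat.factorial_succ]
        ring
      · intro i hi hne
        rw [ih i (by have := Finset.mem_range.mp hi; omega)]
        simp [hne]
      · intro h; exact absurd (Finset.self_mem_range_succ n) h
    · have hj3 : j ≤ n := by omega
      rw [if_neg (by omega)]
      have : ∀ i ∈ range j, (j.choose i : ℝ) *
          ∑ l ∈ range (n+1), (-1:ℝ)^l * (n.choose l) * (l:ℝ)^i = 0 := by
        intro i hi
        rw [ih i (by have := Finset.mem_range.mp hi; omega),
            if_neg (by have := Finset.mem_range.mp hi; omega)]
        ring
      rw [Finset.sum_congr rfl this]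
      simp

open Finset in
lemma gammaProd (α : ℝ) (hα : 0 < α) (l : ℕ) : ∀ k : ℕ,
    Real.Gamma (α + l + k + 1) = Real.Gamma (α + (l:ℝ) + 1) * ∏ j ∈ range k, ((l:ℝ) + (α + 1 + j)) := by
  intro k
  induction k with
  | zero => simp
  | succ k ih =>
    have h1 : α + (l:ℝ) + (k+1:ℕ) + 1 = (α + l + k + 1) + 1 := by push_cast; ring
    have h2 : (α:ℝ) + l + k + 1 ≠ 0 := by positivity
    rw [h1, Real.Gamma_add_one h2, ih, Finset.prod_range_succ]
    push_cast; ring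

open Finset in
lemma lemQ (α : ℝ) (hα : 0 < α) (k m : ℕ) (hkm : k ≤ m) :
    ∑ l ∈ range (m+1), (-1:ℝ)^l * (m.choose l) *
        (Real.Gamma (α + l + k + 1) / Real.Gamma (α + l + 1))
      = if k = m then (-1:ℝ)^m * m.factorial else 0 := by
  classical
  set Q : Polynomial ℝ := ∏ j ∈ range k, (Polynomial.X + Polynomial.C (α + 1 + j)) with hQ
  have hmonic : Q.Monic := Polynomial.monic_prod_of_monic _ _
    (fun j _ => Polynomial.monic_X_add_C _)
  have hdeg : Q.natDegree = k := by
    rw [hQ, Polynomial.natDegree_prod]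
    · simp only [Polynomial.natDegree_X_add_C, Finset.sum_const, Finset.card_range,
        smul_eq_mul, mul_one]
    · intro j _; exact (Polynomial.monic_X_add_C _).ne_zero
  have heval : ∀ l : ℕ, Q.eval (l:ℝ) = ∏ j ∈ range k, ((l:ℝ) + (α + 1 + j)) := by
    intro l; rw [hQ]; simp [Polynomial.eval_prod]
  have hratio : ∀ l : ℕ, Real.Gamma (α + l + k + 1) / Real.Gamma (α + l + 1) = Q.eval (l:ℝ) := by
    intro l
    have hpos : 0 < Real.Gamma (α + (l:ℝ) + 1) :=
      Real.Gamma_pos_of_pos (by positivity)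
    rw [gammaProd α hα l k, heval]
    field_simp
  simp_rw [hratio]
  have hev : ∀ l : ℕ, Q.eval (l:ℝ) = ∑ i ∈ range (m+1), Q.coeff i * (l:ℝ)^i := by
    intro l
    exact Polynomial.eval_eq_sum_range' (by omega : Q.natDegree < m+1) _
  simp_rw [hev, Finset.mul_sum]
  rw [Finset.sum_comm]
  have : ∀ i ∈ range (m+1), ∑ l ∈ range (m+1), (-1:ℝ)^l * (m.choose l) * (Q.coeff i * (l:ℝ)^i)
      = Q.coeff i * (if i = m then (-1:ℝ)^m * m.factorial else 0) := by
    intro i hi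
    rw [← lemM m i (by have := Finset.mem_range.mp hi; omega), Finset.mul_sum]
    exact Finset.sum_congr rfl (fun l _ => by ring)
  rw [Finset.sum_congr rfl this]
  rcases eq_or_lt_of_le hkm with h1 | h2
  · subst h1
    rw [Finset.sum_eq_single k]
    · have hc : Q.coeff k = 1 := by rw [← hdeg]; exact hmonic.coeff_natDegree
      simp [hc]
    · intro i hi hne; simp [hne]
    · intro h; exact absurd (Finset.self_mem_range_succ k) h
  · rw [if_neg (by omega)]
    apply Finset.sum_eq_zero
    intro i hi
    rcases eq_or_ne i m with rfl | hne
    · rw [Polynomial.coeff_eq_zero_of_natDegree_lt (by omega)]; ring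
    · simp [hne]


open Finset in
lemma mono_integrable (α : ℝ) (hα : 0 < α) (k : ℕ) :
    IntegrableOn (fun x : ℝ => (x ^ α * Real.exp (-x)) * x ^ k) (Ioi 0) := by
  have h := Real.GammaIntegral_convergent (s := α + k + 1) (by positivity)
  apply (h.congr_fun · measurableSet_Ioi)
  intro x hx
  have hx' : (0:ℝ) < x := hx
  simp only
  rw [show α + (k:ℝ) + 1 - 1 = α + k from by ring, Real.rpow_add hx',
      Real.rpow_natCast]
  ring

open Finset in
lemma mono_integral (α : ℝ) (hα : 0 < α) (k : ℕ) :
    ∫ x in Ioi (0:ℝ), (x ^ α * Real.exp (-x)) * x ^ k = Real.Gamma (α + k + 1) := by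
  rw [Real.Gamma_eq_integral (by positivity : (0:ℝ) < α + k + 1)]
  apply setIntegral_congr_fun measurableSet_Ioi
  intro x hx
  have hx' : (0:ℝ) < x := hx
  simp only
  rw [show α + (k:ℝ) + 1 - 1 = α + k from by ring, Real.rpow_add hx',
      Real.rpow_natCast]
  ring

noncomputable def lagC (α : ℝ) (n k : ℕ) : ℝ :=
  (-1 : ℝ) ^ k / ((Nat.factorial k : ℝ) * (Nat.factorial (n - k) : ℝ)) *
      (Real.Gamma (n + α + 1) / Real.Gamma (k + α + 1))

open Finset in
lemma lagPoly_ortho (α : ℝ) (hα : 0 < α) (n m : ℕ) (hnm : n ≤ m) :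
    ∫ x in Ioi (0:ℝ), (x ^ α * Real.exp (-x)) * (lagPoly α n x * lagPoly α m x)
      = if n = m then Real.Gamma (α + n + 1) / n.factorial else 0 := by
  classical
  have hexp : ∀ x : ℝ, (x ^ α * Real.exp (-x)) * (lagPoly α n x * lagPoly α m x)
      = ∑ k ∈ range (n+1), ∑ l ∈ range (m+1),
        (lagC α n k * lagC α m l) * ((x ^ α * Real.exp (-x)) * x ^ (k + l)) := by
    intro x
    unfold lagPoly
    rw [Finset.sum_mul_sum]
    rw [Finset.mul_sum]
    refine Finset.sum_congr rfl (fun k _ => ?_)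
    rw [Finset.mul_sum]
    refine Finset.sum_congr rfl (fun l _ => ?_)
    unfold lagC
    rw [pow_add]
    ring
  simp_rw [hexp]
  rw [MeasureTheory.integral_finset_sum]
  swap
  · intro k _
    apply MeasureTheory.integrable_finset_sum
    intro l _
    exact ((mono_integrable α hα (k+l)).const_mul _)
  have hint : ∀ k ∈ range (n+1), ∫ x in Ioi (0:ℝ), ∑ l ∈ range (m+1),
        (lagC α n k * lagC α m l) * ((x ^ α * Real.exp (-x)) * x ^ (k + l))
      = ∑ l ∈ range (m+1), (lagC α n k * lagC α m l) * Real.Gamma (α + (k+l:ℕ) + 1) := by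
    intro k _
    rw [MeasureTheory.integral_finset_sum]
    swap
    · intro l _; exact ((mono_integrable α hα (k+l)).const_mul _)
    refine Finset.sum_congr rfl (fun l _ => ?_)
    rw [MeasureTheory.integral_const_mul, mono_integral α hα (k+l)]
  rw [Finset.sum_congr rfl hint]
  -- now purely combinatorial
  have hGpos : ∀ r : ℝ, 0 < r → 0 < Real.Gamma r := fun r hr => Real.Gamma_pos_of_pos hr
  have inner : ∀ k ∈ range (n+1),
      ∑ l ∈ range (m+1), (lagC α n k * lagC α m l) * Real.Gamma (α + (k+l:ℕ) + 1)
        = lagC α n k * (Real.Gamma ((m:ℝ) + α + 1) / m.factorial)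
            * (if k = m then (-1:ℝ)^m * m.factorial else 0) := by
    intro k hk
    have hkm : k ≤ m := le_trans (by exact Nat.lt_succ_iff.mp (Finset.mem_range.mp hk)) hnm
    rw [← lemQ α hα k m hkm, Finset.mul_sum]
    refine Finset.sum_congr rfl (fun l hl => ?_)
    have hlm : l ≤ m := Nat.lt_succ_iff.mp (Finset.mem_range.mp hl)
    have hfac : ((m.choose l : ℝ)) = (m.factorial : ℝ) / (l.factorial * (m-l).factorial) :=
      Nat.cast_choose ℝ hlm
    have h1 : Real.Gamma (α + ((k+l:ℕ):ℝ) + 1) = Real.Gamma (α + l + k + 1) := by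
      push_cast; ring_nf
    have h2 : Real.Gamma ((l:ℝ) + α + 1) = Real.Gamma (α + l + 1) := by ring_nf
    unfold lagC
    rw [h1, h2, hfac]
    have hG1 : Real.Gamma (α + (l:ℝ) + 1) ≠ 0 := ne_of_gt (hGpos _ (by positivity))
    have hf1 : (l.factorial : ℝ) ≠ 0 := Nat.cast_ne_zero.mpr l.factorial_ne_zero
    have hf2 : ((m-l).factorial : ℝ) ≠ 0 := Nat.cast_ne_zero.mpr (m-l).factorial_ne_zero
    have hf3 : (m.factorial : ℝ) ≠ 0 := Nat.cast_ne_zero.mpr m.factorial_ne_zero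
    field_simp
  rw [Finset.sum_congr rfl inner]
  rcases eq_or_lt_of_le hnm with h1 | h2
  · subst h1
    rw [if_pos rfl, Finset.sum_eq_single n]
    · rw [if_pos rfl]
      unfold lagC
      have hG1 : Real.Gamma ((n:ℝ) + α + 1) ≠ 0 := ne_of_gt (hGpos _ (by positivity))
      have hf3 : (n.factorial : ℝ) ≠ 0 := Nat.cast_ne_zero.mpr n.factorial_ne_zero
      have h2 : Real.Gamma (α + (n:ℝ) + 1) = Real.Gamma ((n:ℝ) + α + 1) := by ring_nf
      rw [h2]
      simp [Nat.sub_self, Nat.factorial_zero]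
      field_simp
      have hs : (-1:ℝ)^n * (-1:ℝ)^n = 1 := by
        rw [← pow_add, ← two_mul, pow_mul]; norm_num
      linear_combination hs
    · intro i hi hne; simp [hne]
    · intro h; exact absurd (Finset.self_mem_range_succ n) h
  · rw [if_neg (by omega)]
    apply Finset.sum_eq_zero
    intro k hk
    have : k ≠ m := by have := Finset.mem_range.mp hk; omega
    simp [this]

open Finset in
lemma lagPoly_integrable (α : ℝ) (hα : 0 < α) (n m : ℕ) :
    IntegrableOn (fun x : ℝ => (x ^ α * Real.exp (-x)) * (lagPoly α n x * lagPoly α m x))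
      (Ioi 0) := by
  have hexp : (fun x : ℝ => (x ^ α * Real.exp (-x)) * (lagPoly α n x * lagPoly α m x))
      = fun x : ℝ => ∑ k ∈ range (n+1), ∑ l ∈ range (m+1),
        (lagC α n k * lagC α m l) * ((x ^ α * Real.exp (-x)) * x ^ (k + l)) := by
    funext x
    unfold lagPoly
    rw [Finset.sum_mul_sum, Finset.mul_sum]
    refine Finset.sum_congr rfl (fun k _ => ?_)
    rw [Finset.mul_sum]
    refine Finset.sum_congr rfl (fun l _ => ?_)
    unfold lagC
    rw [pow_add]
    ring
  rw [hexp]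
  apply MeasureTheory.integrable_finset_sum
  intro k _
  apply MeasureTheory.integrable_finset_sum
  intro l _
  exact (mono_integrable α hα (k+l)).const_mul _

open Finset in
lemma lagFun_integrable (α : ℝ) (hα : 0 < α) (n m : ℕ) :
    IntegrableOn (fun x : ℝ => (x ^ α * Real.exp (-x)) * (lagFun α n x * lagFun α m x))
      (Ioi 0) := by
  have hc : (fun x : ℝ => (x ^ α * Real.exp (-x)) * (lagFun α n x * lagFun α m x))
      = fun x : ℝ => (Real.sqrt ((n.factorial:ℝ)/Real.Gamma (α+n+1))
          * Real.sqrt ((m.factorial:ℝ)/Real.Gamma (α+m+1)))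
        * ((x ^ α * Real.exp (-x)) * (lagPoly α n x * lagPoly α m x)) := by
    funext x; unfold lagFun; ring
  rw [hc]
  exact (lagPoly_integrable α hα n m).const_mul _

open Finset in
lemma lagFun_ortho (α : ℝ) (hα : 0 < α) (n m : ℕ) :
    ∫ x in Ioi (0:ℝ), (x ^ α * Real.exp (-x)) * (lagFun α n x * lagFun α m x)
      = if n = m then 1 else 0 := by
  have main : ∀ n m : ℕ, n ≤ m →
      ∫ x in Ioi (0:ℝ), (x ^ α * Real.exp (-x)) * (lagFun α n x * lagFun α m x)
        = if n = m then 1 else 0 := by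
    intro n m hnm
    have hc : ∀ x : ℝ, (x ^ α * Real.exp (-x)) * (lagFun α n x * lagFun α m x)
        = (Real.sqrt ((n.factorial:ℝ)/Real.Gamma (α+n+1))
            * Real.sqrt ((m.factorial:ℝ)/Real.Gamma (α+m+1)))
          * ((x ^ α * Real.exp (-x)) * (lagPoly α n x * lagPoly α m x)) := by
      intro x; unfold lagFun; ring
    simp_rw [hc]
    rw [MeasureTheory.integral_const_mul, lagPoly_ortho α hα n m hnm]
    rcases eq_or_ne n m with rfl | hne
    · rw [if_pos rfl, if_pos rfl]
      have h1 : 0 < Real.Gamma (α + (n:ℝ) + 1) := Real.Gamma_pos_of_pos (by positivity)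
      have h2 : (0:ℝ) ≤ (n.factorial:ℝ)/Real.Gamma (α+n+1) := by positivity
      rw [Real.mul_self_sqrt h2]
      have hf : (n.factorial:ℝ) ≠ 0 := Nat.cast_ne_zero.mpr n.factorial_ne_zero
      field_simp
    · simp [hne]
  rcases le_total n m with h | h
  · exact main n m h
  · have h2 := main m n h
    have hsym : ∀ x : ℝ, lagFun α n x * lagFun α m x = lagFun α m x * lagFun α n x :=
      fun x => mul_comm _ _
    simp_rw [hsym]
    rw [h2]
    simp [eq_comm]

open Quaternion in
open Finset in
lemma keylem (α : ℝ) (hα : 0 < α) (N : ℕ) (u v : ℕ → ℍ[ℝ]) (τ : ℍ[ℝ]) (hτ : ‖τ‖ = 1) :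
    ∫ x in Ioi (0:ℝ), (x ^ α * Real.exp (-x)) •
        (star (∑ n ∈ range (N+1), (lagFun α n x : ℍ[ℝ]) * τ^n * u n) *
          ∑ m ∈ range (N+1), (lagFun α m x : ℍ[ℝ]) * τ^m * v m)
      = ∑ n ∈ range (N+1), star (u n) * v n := by
  have hτ2 : ∀ n : ℕ, star (τ^n) * τ^n = 1 := by
    intro n
    rw [Quaternion.star_mul_self, map_pow, Quaternion.normSq_eq_norm_mul_self, hτ]
    norm_num
  have hterm : ∀ x : ℝ, (x ^ α * Real.exp (-x)) •
        (star (∑ n ∈ range (N+1), (lagFun α n x : ℍ[ℝ]) * τ^n * u n) *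
          ∑ m ∈ range (N+1), (lagFun α m x : ℍ[ℝ]) * τ^m * v m)
      = ∑ n ∈ range (N+1), ∑ m ∈ range (N+1),
          ((x ^ α * Real.exp (-x)) * (lagFun α n x * lagFun α m x)) •
            ((star (u n) * star (τ^n)) * (τ^m * v m)) := by
    intro x
    rw [star_sum, Finset.sum_mul_sum, Finset.smul_sum]
    refine Finset.sum_congr rfl fun n _ => ?_
    rw [Finset.smul_sum]
    refine Finset.sum_congr rfl fun m _ => ?_
    simp only [Quaternion.coe_mul_eq_smul, smul_mul_assoc, Quaternion.star_smul,
      star_mul, mul_smul_comm, smul_smul]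
    rw [mul_comm (lagFun α m x) (lagFun α n x)]
  simp_rw [hterm]
  rw [MeasureTheory.integral_finset_sum]
  swap
  · intro n _
    apply MeasureTheory.integrable_finset_sum
    intro m _
    exact (lagFun_integrable α hα n m).smul_const _
  have h1 : ∀ n ∈ range (N+1),
      ∫ x in Ioi (0:ℝ), ∑ m ∈ range (N+1),
          ((x ^ α * Real.exp (-x)) * (lagFun α n x * lagFun α m x)) •
            ((star (u n) * star (τ^n)) * (τ^m * v m))
        = ∑ m ∈ range (N+1), (if n = m then (1:ℝ) else 0) •
            ((star (u n) * star (τ^n)) * (τ^m * v m)) := by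
    intro n _
    rw [MeasureTheory.integral_finset_sum]
    swap
    · intro m _
      exact (lagFun_integrable α hα n m).smul_const _
    refine Finset.sum_congr rfl fun m _ => ?_
    rw [integral_smul_const, lagFun_ortho α hα n m]
  rw [Finset.sum_congr rfl h1]
  refine Finset.sum_congr rfl fun n hn => ?_
  rw [Finset.sum_eq_single n]
  · rw [if_pos rfl, one_smul, mul_assoc, ← mul_assoc (star (τ^n)), hτ2 n, one_mul]
  · intro m _ hne; rw [if_neg (Ne.symm hne), zero_smul]
  · intro h; exact absurd hn h

/-- the fractional transform with `‖θ‖ = 1` preserves the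
quaternionic scalar product of finite Laguerre expansions. -/
theorem stmt3 (α : ℝ) (hα : 0 < α) (θ : ℍ[ℝ]) (hθ : ‖θ‖ = 1) (N : ℕ)
    (c d : ℕ → ℍ[ℝ]) (f h gf gh : ℝ → ℍ[ℝ])
    (hf : ∀ x, f x = ∑ n ∈ Finset.range (N + 1), (lagFun α n x : ℍ[ℝ]) * c n)
    (hh : ∀ x, h x = ∑ n ∈ Finset.range (N + 1), (lagFun α n x : ℍ[ℝ]) * d n)
    (hgf : ∀ x, gf x = ∑ n ∈ Finset.range (N + 1), (lagFun α n x : ℍ[ℝ]) * θ ^ n * c n)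
    (hgh : ∀ x, gh x = ∑ n ∈ Finset.range (N + 1), (lagFun α n x : ℍ[ℝ]) * θ ^ n * d n) :
    ∫ x in Ioi (0 : ℝ), (x ^ α * Real.exp (-x)) • (star (gf x) * gh x) =
      ∫ x in Ioi (0 : ℝ), (x ^ α * Real.exp (-x)) • (star (f x) * h x) := by
  have h1 : ∀ x : ℝ, f x = ∑ n ∈ Finset.range (N + 1), (lagFun α n x : ℍ[ℝ]) * (1:ℍ[ℝ])^n * c n := by
    intro x; rw [hf]; exact Finset.sum_congr rfl fun n _ => by rw [one_pow, mul_one]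
  have h2 : ∀ x : ℝ, h x = ∑ n ∈ Finset.range (N + 1), (lagFun α n x : ℍ[ℝ]) * (1:ℍ[ℝ])^n * d n := by
    intro x; rw [hh]; exact Finset.sum_congr rfl fun n _ => by rw [one_pow, mul_one]
  simp_rw [hgf, hgh, h1, h2]
  rw [keylem α hα N c d θ hθ, keylem α hα N c d 1 norm_one]
end

section
/- Let α > 0 and let r ∈ [0,1). Then for all x, y ≥ 0 the series ∑_{m=0}^∞ (m!/Γ(m+α+1))·r^m·|L_m^{(α)}(x)|·|L_m^{(α)}(y)| converges. (Absolute convergence of the Hille–Hardy kernel series for |θ| < 1.) -/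
open MeasureTheory Set Quaternion
open Finset Filter

lemma gamma_fact_le (α : ℝ) (hα : 0 < α) (k : ℕ) :
    (Nat.factorial k : ℝ) * Real.Gamma (α + 1) ≤ Real.Gamma (k + α + 1) := by
  induction k with
  | zero => simp
  | succ k ih =>
    have hpos : (0:ℝ) < (k:ℝ) + α + 1 := by positivity
    have hG : 0 < Real.Gamma ((k:ℝ) + α + 1) := Real.Gamma_pos_of_pos hpos
    have h1 : Real.Gamma (((k:ℕ)+1 : ℕ) + α + 1) = ((k:ℝ) + α + 1) * Real.Gamma ((k:ℝ) + α + 1) := by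
      push_cast
      rw [show (k:ℝ) + 1 + α + 1 = ((k:ℝ) + α + 1) + 1 by ring, Real.Gamma_add_one hpos.ne']
    rw [h1]
    have : ((Nat.factorial (k+1) : ℝ)) = ((k:ℝ)+1) * Nat.factorial k := by
      push_cast [Nat.factorial_succ]; ring
    rw [this, mul_assoc]
    have h2 : ((k:ℝ)+1) * ((Nat.factorial k : ℝ) * Real.Gamma (α+1)) ≤ ((k:ℝ)+1) * Real.Gamma ((k:ℝ)+α+1) :=
      mul_le_mul_of_nonneg_left ih (by positivity)
    exact h2.trans (mul_le_mul_of_nonneg_right (by linarith) hG.le)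

lemma lagPoly_abs_le (α : ℝ) (hα : 0 < α) (m : ℕ) (x : ℝ) (hx : 0 ≤ x)
    (ε : ℝ) (hε : 0 < ε) :
    |lagPoly α m x| ≤ Real.Gamma (m + α + 1) / ((Nat.factorial m : ℝ) * Real.Gamma (α + 1)) *
      Real.exp (ε * m + x / ε) := by
  have hG1 : 0 < Real.Gamma (α + 1) := Real.Gamma_pos_of_pos (by linarith)
  have hGm : 0 < Real.Gamma ((m:ℝ) + α + 1) := Real.Gamma_pos_of_pos (by positivity)
  set A : ℝ := (ε * m + x / ε) / 2 with hA
  have hA0 : 0 ≤ A := by positivity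
  have hmxA : (m : ℝ) * x ≤ A ^ 2 := by
    have h1 : (ε * m) * (x / ε) = (m : ℝ) * x := by field_simp
    nlinarith [sq_nonneg (ε * m - x / ε)]
  calc |lagPoly α m x|
      ≤ ∑ k ∈ range (m+1), |(-1 : ℝ) ^ k / ((Nat.factorial k : ℝ) * (Nat.factorial (m - k) : ℝ)) *
          (Real.Gamma (m + α + 1) / Real.Gamma (k + α + 1)) * x ^ k| :=
        Finset.abs_sum_le_sum_abs _ _
    _ ≤ ∑ k ∈ range (m+1),
          Real.Gamma ((m:ℝ) + α + 1) / ((Nat.factorial m : ℝ) * Real.Gamma (α + 1)) *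
            (((m:ℝ) * x) ^ k / ((Nat.factorial k : ℝ))^2) := by
        apply Finset.sum_le_sum
        intro k hk
        have hkm : k ≤ m := Nat.lt_succ_iff.mp (mem_range.mp hk)
        have hGk : 0 < Real.Gamma ((k:ℝ) + α + 1) := Real.Gamma_pos_of_pos (by positivity)
        have hfk : (0:ℝ) < Nat.factorial k := by exact_mod_cast Nat.factorial_pos k
        have hfmk : (0:ℝ) < Nat.factorial (m - k) := by exact_mod_cast Nat.factorial_pos _
        have hfm : (0:ℝ) < Nat.factorial m := by exact_mod_cast Nat.factorial_pos m
        have habs : |(-1 : ℝ) ^ k / ((Nat.factorial k : ℝ) * (Nat.factorial (m - k) : ℝ)) *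
            (Real.Gamma (m + α + 1) / Real.Gamma (k + α + 1)) * x ^ k|
            = 1 / ((Nat.factorial k : ℝ) * (Nat.factorial (m - k) : ℝ)) *
              (Real.Gamma ((m:ℝ) + α + 1) / Real.Gamma ((k:ℝ) + α + 1)) * x ^ k := by
          rw [abs_mul, abs_mul, abs_div, abs_pow, abs_neg, abs_one, one_pow]
          rw [abs_of_nonneg (by positivity : (0:ℝ) ≤ (Nat.factorial k : ℝ) * (Nat.factorial (m - k) : ℝ)),
            abs_of_nonneg (by positivity : (0:ℝ) ≤ Real.Gamma ((m:ℝ) + α + 1) / Real.Gamma ((k:ℝ) + α + 1)),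
            abs_of_nonneg (by positivity : (0:ℝ) ≤ x ^ k)]
        rw [habs]
        -- need: Γm/(k!(m-k)! Γk) * x^k ≤ Γm/(m! Γ1) * m^k x^k / k!^2
        -- i.e.  m! Γ1 k!^2 ≤ k!(m-k)! Γk m^k, i.e. m! * (k! Γ1) * k! ≤ (m^k (m-k)!) * Γk * k!
        have key : (Nat.factorial m : ℝ) * Real.Gamma (α+1) * (Nat.factorial k : ℝ)^2 ≤
            ((Nat.factorial k : ℝ) * (Nat.factorial (m-k) : ℝ)) * Real.Gamma ((k:ℝ)+α+1) * (m:ℝ)^k := by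
          have h1 : (Nat.factorial m : ℝ) ≤ (Nat.factorial (m-k) : ℝ) * (m:ℝ)^k := by
            have := Nat.factorial_mul_descFactorial hkm
            have h2 : Nat.factorial m ≤ Nat.factorial (m-k) * m^k := by
              calc Nat.factorial m = (m-k).factorial * m.descFactorial k := this.symm
                _ ≤ (m-k).factorial * m^k := Nat.mul_le_mul_left _ (Nat.descFactorial_le_pow m k)
            exact_mod_cast h2
          have h2 := gamma_fact_le α hα k
          calc (Nat.factorial m : ℝ) * Real.Gamma (α+1) * (Nat.factorial k : ℝ)^2
              = ((Nat.factorial m : ℝ)) * (((Nat.factorial k : ℝ)) * Real.Gamma (α+1)) * (Nat.factorial k : ℝ) := by ring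
            _ ≤ ((Nat.factorial (m-k) : ℝ) * (m:ℝ)^k) * Real.Gamma ((k:ℝ)+α+1) * (Nat.factorial k : ℝ) := by
                apply mul_le_mul_of_nonneg_right _ hfk.le
                exact mul_le_mul h1 h2 (by positivity) (by positivity)
            _ = ((Nat.factorial k : ℝ) * (Nat.factorial (m-k) : ℝ)) * Real.Gamma ((k:ℝ)+α+1) * (m:ℝ)^k := by ring
        have eL : 1 / ((Nat.factorial k : ℝ) * (Nat.factorial (m - k) : ℝ)) *
              (Real.Gamma ((m:ℝ) + α + 1) / Real.Gamma ((k:ℝ) + α + 1)) * x ^ k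
            = Real.Gamma ((m:ℝ)+α+1) * x^k /
              (((Nat.factorial k : ℝ) * (Nat.factorial (m-k) : ℝ)) * Real.Gamma ((k:ℝ)+α+1)) := by
          field_simp
        have eR : Real.Gamma ((m:ℝ) + α + 1) / ((Nat.factorial m : ℝ) * Real.Gamma (α + 1)) *
              (((m:ℝ) * x) ^ k / ((Nat.factorial k : ℝ))^2)
            = Real.Gamma ((m:ℝ)+α+1) * ((m:ℝ)^k * x^k) /
              (((Nat.factorial m : ℝ) * Real.Gamma (α+1)) * (Nat.factorial k : ℝ)^2) := by
          rw [mul_pow]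
          field_simp
        rw [eL, eR, div_le_div_iff₀ (by positivity) (by positivity)]
        calc Real.Gamma ((m:ℝ)+α+1) * x^k * ((Nat.factorial m : ℝ) * Real.Gamma (α+1) * (Nat.factorial k:ℝ)^2)
            ≤ Real.Gamma ((m:ℝ)+α+1) * x^k * (((Nat.factorial k : ℝ) * (Nat.factorial (m-k) : ℝ)) * Real.Gamma ((k:ℝ)+α+1) * (m:ℝ)^k) := by
              apply mul_le_mul_of_nonneg_left key (by positivity)
          _ = Real.Gamma ((m:ℝ)+α+1) * ((m:ℝ)^k * x^k) * ((Nat.factorial k:ℝ) * (Nat.factorial (m-k):ℝ) * Real.Gamma ((k:ℝ)+α+1)) := by ring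
    _ = Real.Gamma ((m:ℝ) + α + 1) / ((Nat.factorial m : ℝ) * Real.Gamma (α + 1)) *
          ∑ k ∈ range (m+1), ((m:ℝ) * x) ^ k / ((Nat.factorial k : ℝ))^2 := by
        rw [Finset.mul_sum]
    _ ≤ Real.Gamma ((m:ℝ) + α + 1) / ((Nat.factorial m : ℝ) * Real.Gamma (α + 1)) *
          Real.exp (ε * m + x / ε) := by
        apply mul_le_mul_of_nonneg_left _ (by positivity)
        calc ∑ k ∈ range (m+1), ((m:ℝ) * x) ^ k / ((Nat.factorial k : ℝ))^2
            ≤ ∑ k ∈ range (m+1), (A ^ k / (Nat.factorial k : ℝ))^2 := by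
              apply Finset.sum_le_sum
              intro k _
              rw [div_pow, ← pow_mul, mul_comm k 2, pow_mul]
              apply div_le_div_of_nonneg_right _ (by positivity)
              · exact pow_le_pow_left₀ (by positivity) hmxA k
            _ ≤ (∑ k ∈ range (m+1), A ^ k / (Nat.factorial k : ℝ))^2 :=
              Finset.sum_sq_le_sq_sum_of_nonneg (fun k _ => by positivity)
            _ ≤ (Real.exp A)^2 := by
              apply pow_le_pow_left₀ (Finset.sum_nonneg (fun k _ => by positivity))
              exact Real.sum_le_exp_of_nonneg hA0 (m+1)
            _ = Real.exp (ε * m + x / ε) := by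
              rw [← Real.exp_nat_mul]
              norm_num
              rw [hA]
              ring_nf

lemma hh_summable (α : ℝ) (hα : 0 < α) (q : ℝ) (hq0 : 0 < q) (hq1 : q < 1) :
    Summable (fun m : ℕ => Real.Gamma ((m:ℝ) + α + 1) / (Nat.factorial m : ℝ) * q ^ m) := by
  have hGpos : ∀ m : ℕ, 0 < Real.Gamma ((m:ℝ) + α + 1) := fun m =>
    Real.Gamma_pos_of_pos (by positivity)
  have hfpos : ∀ m : ℕ, (0:ℝ) < Nat.factorial m := fun m => by exact_mod_cast Nat.factorial_pos m
  have hpos : ∀ m : ℕ, 0 < Real.Gamma ((m:ℝ) + α + 1) / (Nat.factorial m : ℝ) * q ^ m :=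
    fun m => by positivity
  apply summable_of_ratio_test_tendsto_lt_one hq1
    (Eventually.of_forall fun m => (hpos m).ne')
  have heq : ∀ n : ℕ,
      ‖Real.Gamma ((n+1:ℕ) + α + 1) / (Nat.factorial (n+1) : ℝ) * q ^ (n+1)‖ /
        ‖Real.Gamma ((n:ℝ) + α + 1) / (Nat.factorial n : ℝ) * q ^ n‖
      = q * (1 + α * (1 / ((n:ℝ) + 1))) := by
    intro n
    have hG1 : Real.Gamma (((n+1:ℕ):ℝ) + α + 1) = ((n:ℝ) + α + 1) * Real.Gamma ((n:ℝ) + α + 1) := by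
      push_cast
      rw [show (n:ℝ) + 1 + α + 1 = ((n:ℝ) + α + 1) + 1 by ring,
        Real.Gamma_add_one (by positivity : ((n:ℝ) + α + 1) ≠ 0)]
    have hf1 : ((Nat.factorial (n+1) : ℝ)) = ((n:ℝ) + 1) * Nat.factorial n := by
      push_cast [Nat.factorial_succ]; ring
    rw [Real.norm_eq_abs, Real.norm_eq_abs, abs_of_pos (by
        have := hpos (n+1); push_cast at this ⊢; convert this using 3 <;> push_cast <;> ring_nf),
      abs_of_pos (hpos n)]
    rw [hG1, hf1]
    have h1 : Real.Gamma ((n:ℝ) + α + 1) ≠ 0 := (Real.Gamma_pos_of_pos (by positivity)).ne'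
    have h2 : ((Nat.factorial n : ℝ)) ≠ 0 := (hfpos n).ne'
    have h3 : q ≠ 0 := hq0.ne'
    field_simp
    ring
  simp only [heq]
  have h0 : Tendsto (fun n : ℕ => q * (1 + α * (1 / ((n:ℝ) + 1)))) atTop (nhds (q * (1 + α * 0))) := by
    exact (((tendsto_one_div_add_atTop_nhds_zero_nat).const_mul α).const_add 1).const_mul q
  simpa using h0

/-- absolute convergence of the Hille–Hardy kernel series for
`|θ| < 1`. -/
theorem stmt8 (α : ℝ) (hα : 0 < α) (r : ℝ) (hr0 : 0 ≤ r) (hr1 : r < 1)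
    (x y : ℝ) (hx : 0 ≤ x) (hy : 0 ≤ y) :
    Summable fun m : ℕ =>
      (Nat.factorial m : ℝ) / Real.Gamma (m + α + 1) * r ^ m *
        |lagPoly α m x| * |lagPoly α m y| := by
  have hG1 : 0 < Real.Gamma (α + 1) := Real.Gamma_pos_of_pos (by linarith)
  set r' : ℝ := max r (1/2) with hr'def
  have hr'0 : (0:ℝ) < r' := lt_of_lt_of_le (by norm_num) (le_max_right _ _)
  have hr'1 : r' < 1 := max_lt hr1 (by norm_num)
  have hrr' : r ≤ r' := le_max_left _ _
  have hlog : Real.log r' < 0 := Real.log_neg hr'0 hr'1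
  set ε : ℝ := -(Real.log r') / 4 with hεdef
  have hε : 0 < ε := by rw [hεdef]; linarith
  set q : ℝ := Real.exp (Real.log r' / 2) with hqdef
  have hq0 : 0 < q := Real.exp_pos _
  have hq1 : q < 1 := by rw [hqdef, Real.exp_lt_one_iff]; linarith
  have hq : r' * Real.exp (2*ε) = q := by
    rw [hqdef, hεdef]
    nth_rewrite 1 [← Real.exp_log hr'0]
    rw [← Real.exp_add]
    congr 1
    ring
  set C : ℝ := Real.exp ((x+y)/ε) / Real.Gamma (α+1)^2 with hCdef
  have hsum := (hh_summable α hα q hq0 hq1).mul_left C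
  apply Summable.of_nonneg_of_le _ _ hsum
  · intro m
    have hGm : 0 < Real.Gamma ((m:ℝ) + α + 1) := Real.Gamma_pos_of_pos (by positivity)
    have := abs_nonneg (lagPoly α m x)
    have := abs_nonneg (lagPoly α m y)
    have : (0:ℝ) ≤ r ^ m := pow_nonneg hr0 m
    positivity
  · intro m
    have hGm : 0 < Real.Gamma ((m:ℝ) + α + 1) := Real.Gamma_pos_of_pos (by positivity)
    have hfm : (0:ℝ) < Nat.factorial m := by exact_mod_cast Nat.factorial_pos m
    have hBx := lagPoly_abs_le α hα m x hx ε hε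
    have hBy := lagPoly_abs_le α hα m y hy ε hε
    set Bx := Real.Gamma ((m:ℝ) + α + 1) / ((Nat.factorial m : ℝ) * Real.Gamma (α + 1)) *
      Real.exp (ε * m + x / ε) with hBxdef
    set By := Real.Gamma ((m:ℝ) + α + 1) / ((Nat.factorial m : ℝ) * Real.Gamma (α + 1)) *
      Real.exp (ε * m + y / ε) with hBydef
    have step1 : (Nat.factorial m : ℝ) / Real.Gamma (m + α + 1) * r ^ m *
        |lagPoly α m x| * |lagPoly α m y| ≤
        (Nat.factorial m : ℝ) / Real.Gamma (m + α + 1) * r' ^ m * Bx * By := by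
      have h1 : (Nat.factorial m : ℝ) / Real.Gamma (m + α + 1) * r ^ m ≤
          (Nat.factorial m : ℝ) / Real.Gamma (m + α + 1) * r' ^ m :=
        mul_le_mul_of_nonneg_left (pow_le_pow_left₀ hr0 hrr' m) (by positivity)
      have h2 : (Nat.factorial m : ℝ) / Real.Gamma (m + α + 1) * r ^ m *
          |lagPoly α m x| ≤ (Nat.factorial m : ℝ) / Real.Gamma (m + α + 1) * r' ^ m * Bx := by
        apply mul_le_mul h1 hBx (abs_nonneg _)
        positivity
      apply mul_le_mul h2 hBy (abs_nonneg _)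
      have : (0:ℝ) ≤ Bx := le_trans (abs_nonneg _) hBx
      positivity
    refine step1.trans (le_of_eq ?_)
    rw [hBxdef, hBydef]
    have hqm : q ^ m = r' ^ m * (Real.exp (2*ε)) ^ m := by rw [← hq, mul_pow]
    have hex : Real.exp (ε * m + x / ε) * Real.exp (ε * m + y / ε) =
        Real.exp ((x+y)/ε) * (Real.exp (2*ε)) ^ m := by
      rw [← Real.exp_add, ← Real.exp_nat_mul, ← Real.exp_add]
      congr 1
      ring
    have hs : (Nat.factorial m : ℝ) / Real.Gamma ((m:ℝ)+α+1) *
        (Real.Gamma ((m:ℝ)+α+1) / ((Nat.factorial m : ℝ) * Real.Gamma (α+1))) *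
        (Real.Gamma ((m:ℝ)+α+1) / ((Nat.factorial m : ℝ) * Real.Gamma (α+1)))
        = Real.Gamma ((m:ℝ)+α+1) / ((Nat.factorial m : ℝ) * Real.Gamma (α+1)^2) := by
      field_simp
    calc (Nat.factorial m : ℝ) / Real.Gamma (m + α + 1) * r' ^ m *
          (Real.Gamma ((m:ℝ) + α + 1) / ((Nat.factorial m : ℝ) * Real.Gamma (α + 1)) *
            Real.exp (ε * m + x / ε)) *
          (Real.Gamma ((m:ℝ) + α + 1) / ((Nat.factorial m : ℝ) * Real.Gamma (α + 1)) *
            Real.exp (ε * m + y / ε))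
        = ((Nat.factorial m : ℝ) / Real.Gamma ((m:ℝ)+α+1) *
            (Real.Gamma ((m:ℝ)+α+1) / ((Nat.factorial m : ℝ) * Real.Gamma (α+1))) *
            (Real.Gamma ((m:ℝ)+α+1) / ((Nat.factorial m : ℝ) * Real.Gamma (α+1)))) *
            r' ^ m * (Real.exp (ε * m + x / ε) * Real.exp (ε * m + y / ε)) := by ring
      _ = Real.Gamma ((m:ℝ)+α+1) / ((Nat.factorial m : ℝ) * Real.Gamma (α+1)^2) *
            r' ^ m * (Real.exp ((x+y)/ε) * (Real.exp (2*ε)) ^ m) := by rw [hs, hex]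
      _ = C * (Real.Gamma ((m:ℝ)+α+1) / (Nat.factorial m : ℝ) * (r' ^ m * (Real.exp (2*ε)) ^ m)) := by
            rw [hCdef]; ring
      _ = C * (Real.Gamma ((m:ℝ)+α+1) / (Nat.factorial m : ℝ) * q ^ m) := by rw [hqm]
end

section
/- Let α > 0, n ∈ ℕ, and z ∈ ℂ with |z| < 1. Then the function x ↦ exp(xz/(z−1))·L_n^{(α)}(x)·x^α·e^{−x} is integrable on (0,∞) and ∫₀^∞ exp(xz/(z−1))·L_n^{(α)}(x)·x^α·e^{−x} dx = (Γ(n+α+1)/n!)·z^n·(1−z)^{α+1}, where (1−z)^{α+1} is the principal-branch complex power. (Equivalently: the second Bargmann transform A^α maps the normalized Laguerre function φ_n^{α} to the normalized Bergman monomial f_n(z) = (Γ(n+α+1)/(πΓ(α)n!))^{1/2} z^n.) -/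
open MeasureTheory Set Quaternion

open Filter Topology

lemma auxRealInt (a c : ℝ) (ha : -1 < a) (hc : 0 < c) :
    IntegrableOn (fun x : ℝ => x ^ a * Real.exp (-(c * x))) (Ioi 0) := by
  have := integrableOn_rpow_mul_exp_neg_mul_rpow ha zero_lt_one hc
  simpa [Real.rpow_one, neg_mul] using this

lemma auxCont (a : ℝ) (b : ℂ) :
    ContinuousOn (fun x : ℝ => ((x ^ a : ℝ) : ℂ) * Complex.exp (-(b * x))) (Ioi 0) := by
  apply ContinuousOn.mul
  · exact Complex.continuous_ofReal.comp_continuousOn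
      (continuousOn_id.rpow_const fun x hx => Or.inl (ne_of_gt hx))
  · exact (Complex.continuous_exp.comp
      ((continuous_const.mul Complex.continuous_ofReal).neg)).continuousOn

lemma auxMeas (a : ℝ) (b : ℂ) :
    AEStronglyMeasurable (fun x : ℝ => ((x ^ a : ℝ) : ℂ) * Complex.exp (-(b * x)))
      (volume.restrict (Ioi 0)) :=
  (auxCont a b).aestronglyMeasurable measurableSet_Ioi

lemma auxNorm (a : ℝ) (b : ℂ) {x : ℝ} (hx : 0 < x) :
    ‖((x ^ a : ℝ) : ℂ) * Complex.exp (-(b * x))‖ = x ^ a * Real.exp (-(b.re * x)) := by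
  rw [norm_mul, Complex.norm_exp, Complex.norm_real,
    Real.norm_eq_abs, abs_of_nonneg (Real.rpow_nonneg hx.le a)]
  congr 2
  simp [Complex.mul_re]

lemma auxCInt (a : ℝ) (ha : -1 < a) {b : ℂ} (hb : 0 < b.re) :
    IntegrableOn (fun x : ℝ => ((x ^ a : ℝ) : ℂ) * Complex.exp (-(b * x))) (Ioi 0) := by
  refine (auxRealInt a b.re ha hb).mono' (auxMeas a b) ?_
  rw [ae_restrict_iff' measurableSet_Ioi]
  exact ae_of_all _ fun x hx => le_of_eq (auxNorm a b hx)

lemma auxDiff (a : ℝ) (ha : -1 < a) {b : ℂ} (hb : 0 < b.re) :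
    DifferentiableAt ℂ
      (fun c : ℂ => ∫ x in Ioi (0:ℝ), ((x ^ a : ℝ) : ℂ) * Complex.exp (-(c * x))) b := by
  have hε : 0 < b.re / 2 := half_pos hb
  have key := hasDerivAt_integral_of_dominated_loc_of_deriv_le
    (μ := volume.restrict (Ioi (0:ℝ))) (x₀ := b)
    (F := fun c (x : ℝ) => ((x ^ a : ℝ) : ℂ) * Complex.exp (-(c * x)))
    (F' := fun c (x : ℝ) => ((x ^ a : ℝ) : ℂ) * (-(x:ℂ) * Complex.exp (-(c * x))))
    (bound := fun x : ℝ => x ^ (a + 1) * Real.exp (-(b.re / 2 * x)))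
    (Metric.ball_mem_nhds b hε) (Eventually.of_forall fun c => auxMeas a c) (auxCInt a ha hb) ?_ ?_
    (auxRealInt (a+1) (b.re/2) (by linarith) hε) ?_
  · exact key.2.differentiableAt
  · -- measurability of F' b
    apply ContinuousOn.aestronglyMeasurable _ measurableSet_Ioi
    have h1 : ContinuousOn (fun x : ℝ => ((x ^ a : ℝ) : ℂ)) (Ioi 0) :=
      Complex.continuous_ofReal.comp_continuousOn
        (continuousOn_id.rpow_const fun x hx => Or.inl (ne_of_gt hx))
    have h2 : Continuous (fun x : ℝ => -(x:ℂ) * Complex.exp (-(b * x))) :=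
      (Complex.continuous_ofReal.neg).mul
        (Complex.continuous_exp.comp ((continuous_const.mul Complex.continuous_ofReal).neg))
    exact h1.mul h2.continuousOn
  · -- bound
    rw [ae_restrict_iff' measurableSet_Ioi]
    refine ae_of_all _ fun x hx c hc => ?_
    have hcre : b.re / 2 ≤ c.re := by
      have h1 : |(c - b).re| ≤ ‖c - b‖ := Complex.abs_re_le_norm _
      have h2 : ‖c - b‖ < b.re / 2 := by
        simpa [Complex.dist_eq] using Metric.mem_ball.mp hc
      have := abs_le.mp h1
      simp only [Complex.sub_re] at this
      linarith [this.1]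
    have hnorm : ‖((x ^ a : ℝ) : ℂ) * (-(x:ℂ) * Complex.exp (-(c * x)))‖
        = x ^ (a+1) * Real.exp (-(c.re * x)) := by
      rw [norm_mul, norm_mul, norm_neg, Complex.norm_exp,
        Complex.norm_real, Complex.norm_real, Real.norm_eq_abs, Real.norm_eq_abs,
        abs_of_nonneg (Real.rpow_nonneg hx.le a), abs_of_nonneg hx.le,
        Real.rpow_add_one hx.ne' a]
      rw [← mul_assoc]
      congr 2
      simp [Complex.mul_re]
    rw [hnorm]
    have : Real.exp (-(c.re * x)) ≤ Real.exp (-(b.re / 2 * x)) := by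
      apply Real.exp_le_exp.mpr
      have := mul_le_mul_of_nonneg_right hcre hx.le
      linarith
    have h0 : (0:ℝ) ≤ x ^ (a+1) := Real.rpow_nonneg hx.le _
    exact mul_le_mul_of_nonneg_left this h0
  · -- derivative
    refine ae_of_all _ fun x c _ => ?_
    have h1 : HasDerivAt (fun c : ℂ => -(c * x)) (-(x:ℂ)) c := by
      exact (hasDerivAt_mul_const (x:ℂ)).neg
    have h2 := (h1.cexp).const_mul ((x ^ a : ℝ) : ℂ)
    have h3 : ((x ^ a : ℝ) : ℂ) * (Complex.exp (-(c * x)) * -(x:ℂ))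
        = ((x ^ a : ℝ) : ℂ) * (-(x:ℂ) * Complex.exp (-(c * x))) := by ring
    rw [h3] at h2
    exact h2

lemma keyIntegral (a : ℝ) (ha : -1 < a) {b : ℂ} (hb : 0 < b.re) :
    ∫ x in Ioi (0:ℝ), ((x ^ a : ℝ) : ℂ) * Complex.exp (-(b * x)) =
      (Real.Gamma (a + 1) : ℂ) * b ^ (-(a:ℂ) - 1) := by
  set F : ℂ → ℂ := fun c => ∫ x in Ioi (0:ℝ), ((x ^ a : ℝ) : ℂ) * Complex.exp (-(c * x)) with hFdef
  set G : ℂ → ℂ := fun c => (Real.Gamma (a + 1) : ℂ) * c ^ (-(a:ℂ) - 1) with hGdef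
  have hU : IsOpen {c : ℂ | 0 < c.re} := isOpen_lt continuous_const Complex.continuous_re
  have hFa : AnalyticOnNhd ℂ F {c : ℂ | 0 < c.re} :=
    DifferentiableOn.analyticOnNhd
      (fun c hc => (auxDiff a ha hc).differentiableWithinAt) hU
  have hGa : AnalyticOnNhd ℂ G {c : ℂ | 0 < c.re} := by
    apply DifferentiableOn.analyticOnNhd _ hU
    intro c hc
    exact ((differentiableAt_id.cpow (differentiableAt_const _)
      (Or.inl hc)).const_mul _).differentiableWithinAt
  have hreal : ∀ r : ℝ, 0 < r → F r = G r := by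
    intro r hr
    have hre : 0 < ((a:ℂ) + 1).re := by
      simp only [Complex.add_re, Complex.ofReal_re, Complex.one_re]; linarith
    have h1 := Complex.integral_cpow_mul_exp_neg_mul_Ioi hre hr
    have h2 : F r = ∫ (t : ℝ) in Ioi 0, (t:ℂ) ^ ((a:ℂ) + 1 - 1) * Complex.exp (-(r * t)) := by
      rw [hFdef]
      refine setIntegral_congr_fun measurableSet_Ioi fun t ht => ?_
      rw [mem_Ioi] at ht
      rw [add_sub_cancel_right, Complex.ofReal_cpow ht.le]
    rw [h2, h1, hGdef]
    have harg : Complex.arg r ≠ Real.pi := by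
      rw [Complex.arg_ofReal_of_nonneg hr.le]
      exact Real.pi_ne_zero.symm
    rw [one_div, Complex.inv_cpow _ _ harg, ← Complex.cpow_neg]
    have hg : Complex.Gamma ((a:ℂ) + 1) = (Real.Gamma (a + 1) : ℂ) := by
      rw [← Complex.Gamma_ofReal]; norm_cast
    rw [hg]
    ring_nf
  have hseq : Tendsto (fun m : ℕ => ((1 + ((m:ℝ)+1)⁻¹ : ℝ) : ℂ)) atTop (𝓝[≠] (1:ℂ)) := by
    rw [tendsto_nhdsWithin_iff]
    constructor
    · have h0 : Tendsto (fun m : ℕ => (1 + ((m:ℝ)+1)⁻¹ : ℝ)) atTop (𝓝 1) := by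
        have : Tendsto (fun n : ℕ => 1 / ((n:ℝ) + 1)) atTop (𝓝 0) :=
          tendsto_one_div_add_atTop_nhds_zero_nat
        simpa [one_div] using tendsto_const_nhds.add this
      have h1 := (Complex.continuous_ofReal.tendsto 1).comp h0
      rw [Complex.ofReal_one] at h1
      exact h1
    · refine Eventually.of_forall fun m => ?_
      simp only [mem_compl_iff, mem_singleton_iff]
      intro h
      rw [show (1:ℂ) = ((1:ℝ):ℂ) by norm_num, Complex.ofReal_inj] at h
      have hpos : (0:ℝ) < ((m:ℝ)+1)⁻¹ := by positivity
      linarith [h]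
  have hfreq : ∃ᶠ c in 𝓝[≠] (1:ℂ), F c = G c :=
    hseq.frequently (Eventually.of_forall (fun m => hreal _ (by positivity))).frequently
  have heq := hFa.eqOn_of_preconnected_of_frequently_eq hGa
    (convex_halfSpace_re_gt 0).isPreconnected (by simp : (1:ℂ) ∈ {c : ℂ | 0 < c.re}) hfreq
  exact heq hb

/-- the second Bargmann transform maps the Laguerre functions to
the Bergman monomials: the integral `∫₀^∞ e^{xz/(z-1)} L_n^{(α)}(x) x^α e^{-x} dx`
equals `(Γ(n+α+1)/n!)·zⁿ·(1-z)^{α+1}`. -/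
theorem stmt12 (α : ℝ) (hα : 0 < α) (n : ℕ) (z : ℂ) (hz : ‖z‖ < 1) :
    IntegrableOn (fun x : ℝ =>
      Complex.exp ((x : ℂ) * z / (z - 1)) * (lagPoly α n x : ℂ) *
        ((x ^ α * Real.exp (-x) : ℝ) : ℂ)) (Ioi 0) ∧
    ∫ x in Ioi (0 : ℝ),
        Complex.exp ((x : ℂ) * z / (z - 1)) * (lagPoly α n x : ℂ) *
          ((x ^ α * Real.exp (-x) : ℝ) : ℂ) =
      ((Real.Gamma (n + α + 1) / (Nat.factorial n : ℝ) : ℝ) : ℂ) * z ^ n *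
        (1 - z) ^ ((α : ℂ) + 1) := by
  have hzne : z ≠ 1 := by intro h; rw [h] at hz; simp at hz
  have hz1 : (1:ℂ) - z ≠ 0 := sub_ne_zero.mpr (Ne.symm hzne)
  have hz1' : z - 1 ≠ 0 := sub_ne_zero.mpr hzne
  set b : ℂ := (1 - z)⁻¹ with hbdef
  have hre1z : 0 < (1 - z).re := by
    have h1 := Complex.abs_re_le_norm z
    have h2 := abs_le.mp h1
    simp only [Complex.sub_re, Complex.one_re]
    linarith [h2.2]
  have hbre : 0 < b.re := by
    rw [hbdef, Complex.inv_re]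
    exact div_pos hre1z (Complex.normSq_pos.mpr hz1)
  set c : ℕ → ℂ := fun k => (((-1:ℝ)^k / ((Nat.factorial k : ℝ) * (Nat.factorial (n-k) : ℝ)) *
      (Real.Gamma (n + α + 1) / Real.Gamma (k + α + 1)) : ℝ) : ℂ) with hcdef
  set g : ℕ → ℝ → ℂ := fun k x => ((x ^ ((k:ℝ) + α) : ℝ) : ℂ) * Complex.exp (-(b * x)) with hgdef
  have hpt : ∀ x ∈ Ioi (0:ℝ), Complex.exp ((x : ℂ) * z / (z - 1)) * (lagPoly α n x : ℂ) *
      ((x ^ α * Real.exp (-x) : ℝ) : ℂ) = ∑ k ∈ Finset.range (n+1), c k * g k x := by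
    intro x hx
    rw [mem_Ioi] at hx
    have hexp : Complex.exp ((x : ℂ) * z / (z - 1)) * Complex.exp (-(x:ℂ))
        = Complex.exp (-(b * x)) := by
      rw [← Complex.exp_add]
      congr 1
      rw [hbdef]
      field_simp
      ring
    have hpowC : ∀ k : ℕ, ((x:ℂ))^k * ((x ^ α : ℝ):ℂ) = ((x ^ ((k:ℝ) + α) : ℝ):ℂ) := by
      intro k
      rw [Real.rpow_add hx, Real.rpow_natCast]
      push_cast
      ring
    simp only [lagPoly, hgdef, hcdef]
    push_cast
    rw [Finset.mul_sum, Finset.sum_mul]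
    refine Finset.sum_congr rfl fun k hk => ?_
    rw [← hexp, ← hpowC k]
    ring
  have hint : ∀ k ∈ Finset.range (n+1), Integrable (fun x => c k * g k x)
      (volume.restrict (Ioi (0:ℝ))) := by
    intro k _
    have hk0 : (0:ℝ) ≤ (k:ℝ) := Nat.cast_nonneg k
    exact ((auxCInt ((k:ℝ) + α) (by linarith) hbre).const_mul (c k))
  constructor
  · exact IntegrableOn.congr_fun (integrable_finset_sum _ hint)
      (fun x hx => (hpt x hx).symm) measurableSet_Ioi
  · rw [setIntegral_congr_fun measurableSet_Ioi hpt, integral_finset_sum _ hint]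
    simp_rw [MeasureTheory.integral_const_mul]
    have harg : (1 - z).arg ≠ Real.pi := by
      rw [Ne, Complex.arg_eq_pi_iff]
      push_neg
      intro h
      linarith
    have hval : ∀ k ∈ Finset.range (n+1), c k * ∫ x in Ioi (0:ℝ), g k x
        = (((Real.Gamma (↑n + α + 1) / (Nat.factorial n : ℝ) : ℝ):ℂ) * (1-z) ^ ((α:ℂ)+1)) *
          ((z-1)^k * 1^(n-k) * (n.choose k : ℂ)) := by
      intro k hk
      have hkn : k ≤ n := Nat.lt_succ_iff.mp (Finset.mem_range.mp hk)
      have hk0 : (0:ℝ) ≤ (k:ℝ) := Nat.cast_nonneg k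
      have hgi : ∫ x in Ioi (0:ℝ), g k x
          = (Real.Gamma (((k:ℝ) + α) + 1) : ℂ) * b ^ (-(((k:ℝ) + α : ℝ):ℂ) - 1) :=
        keyIntegral ((k:ℝ) + α) (by linarith) hbre
      have hbp : b ^ (-(((k:ℝ) + α : ℝ):ℂ) - 1) = (1-z) ^ ((α:ℂ)+1) * (1-z)^k := by
        rw [hbdef, Complex.inv_cpow _ _ harg, ← Complex.cpow_neg]
        have he : -(-(((k:ℝ) + α : ℝ):ℂ) - 1) = ((α:ℂ) + 1) + (k:ℂ) := by push_cast; ring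
        rw [he, Complex.cpow_add _ _ hz1, Complex.cpow_natCast]
      rw [hgi, hbp, hcdef]
      have hfac : ((Nat.factorial k : ℕ) : ℂ) * ((Nat.factorial (n-k) : ℕ) : ℂ) *
          (n.choose k : ℂ) = ((Nat.factorial n : ℕ) : ℂ) := by
        norm_cast
        rw [mul_comm, ← mul_assoc]
        exact Nat.choose_mul_factorial_mul_factorial hkn
      have hzk : (z-1:ℂ)^k = (-1:ℂ)^k * (1-z)^k := by
        rw [← mul_pow]; congr 1; ring
      rw [hzk, one_pow]
      have hG : (Real.Gamma ((k:ℝ)+α+1) : ℂ) ≠ 0 := by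
        simp only [Ne, Complex.ofReal_eq_zero]
        exact (Real.Gamma_pos_of_pos (by positivity)).ne'
      have hkf : ((Nat.factorial k : ℕ) : ℂ) ≠ 0 := Nat.cast_ne_zero.mpr k.factorial_ne_zero
      have hnkf : ((Nat.factorial (n-k) : ℕ) : ℂ) ≠ 0 := Nat.cast_ne_zero.mpr (n-k).factorial_ne_zero
      have hnf : ((Nat.factorial n : ℕ) : ℂ) ≠ 0 := Nat.cast_ne_zero.mpr n.factorial_ne_zero
      push_cast
      push_cast at hG
      field_simp
      linear_combination -((Real.Gamma (↑n + α + 1) : ℂ) *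
        (1 - z) ^ ((α:ℂ) + 1)) * hfac
    rw [Finset.sum_congr rfl hval, ← Finset.mul_sum, ← add_pow]
    have hzz : z - 1 + 1 = z := by ring
    rw [hzz]
    ring
end
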